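/- Let S̃ : (0,∞) → ℝ be continuous with S̃(p) > 0 for all p > 0, suppose S̃(p)/p³ → L as p → 0⁺ for some constant L ∈ (0,∞), and suppose there exist c > 0 and R > 0 with S̃(p) ≥ c·p for all p ≥ R. For ν > 0 define p_ν = (∫₀^∞ e^{−S̃(ξ)/ν} ξ dξ) / (∫₀^∞ e^{−S̃(ξ)/ν} dξ). Then ν^{−1/3} · p_ν → L^{−1/3} · Γ(2/3)/Γ(1/3) as ν → 0⁺; in particular p_ν = const · ν^{1/3} (1 + o(1)). -/

import Mathlib

open MeasureTheory Filter Set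

lemma integrableOn_pow_mul_exp_neg_mul_pow_aux {A : ℝ} (hA : 0 < A) (n k : ℕ) (hn : 1 ≤ n) :
    IntegrableOn (fun u : ℝ => u ^ k * Real.exp (-(A * u ^ n))) (Set.Ioi 0) := by
  have h := integrableOn_rpow_mul_exp_neg_mul_rpow (s := (k : ℝ)) (p := (n : ℝ)) (b := A)
    (lt_of_lt_of_le neg_one_lt_zero (by positivity)) (by exact_mod_cast hn) hA
  refine h.congr_fun (fun x hx => ?_) measurableSet_Ioi
  simp only [Real.rpow_natCast, neg_mul]

theorem laplace_quotient_cubic_scaling (S : ℝ → ℝ)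
    (hcont : ContinuousOn S (Set.Ioi 0)) (hpos : ∀ p : ℝ, 0 < p → 0 < S p)
    (L : ℝ) (hL : 0 < L)
    (hlim : Filter.Tendsto (fun p : ℝ => S p / p ^ 3)
      (nhdsWithin 0 (Set.Ioi 0)) (nhds L))
    (hgrow : ∃ c > (0 : ℝ), ∃ R > (0 : ℝ), ∀ p ≥ R, c * p ≤ S p) :
    Filter.Tendsto
      (fun ν : ℝ => ν ^ (-(1 / 3) : ℝ) *
        ((∫ ξ in Set.Ioi (0 : ℝ), Real.exp (-S ξ / ν) * ξ) /
          (∫ ξ in Set.Ioi (0 : ℝ), Real.exp (-S ξ / ν))))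
      (nhdsWithin 0 (Set.Ioi 0))
      (nhds (L ^ (-(1 / 3) : ℝ) * (Real.Gamma (2 / 3) / Real.Gamma (1 / 3)))) := by
  obtain ⟨c, hc, R, hR0, hgr⟩ := hgrow
  -- small-scale lower bound
  have hev : ∀ᶠ p in nhdsWithin (0:ℝ) (Set.Ioi 0), L / 2 ≤ S p / p ^ 3 :=
    hlim.eventually (eventually_ge_nhds (by linarith))
  obtain ⟨δ, hδmem, hδ⟩ := mem_nhdsGT_iff_exists_Ioc_subset.mp hev
  have hδ0 : (0:ℝ) < δ := hδmem
  -- intermediate-scale lower bound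
  set R' : ℝ := max R δ with hR'def
  have hδR' : δ ≤ R' := le_max_right _ _
  have hR'0 : 0 < R' := lt_of_lt_of_le hδ0 hδR'
  have hKne : (Set.Icc δ R').Nonempty := ⟨δ, le_refl δ, hδR'⟩
  have hKsub : Set.Icc δ R' ⊆ Set.Ioi 0 := fun x hx => lt_of_lt_of_le hδ0 hx.1
  obtain ⟨x₀, hx₀K, hx₀min⟩ := isCompact_Icc.exists_isMinOn hKne (hcont.mono hKsub)
  set m : ℝ := S x₀ with hmdef
  have hm0 : 0 < m := hpos x₀ (hKsub hx₀K)
  set A : ℝ := min (L / 2) (min (m / R' ^ 3) c) with hAdef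
  have hA : 0 < A := lt_min (by linarith) (lt_min (by positivity) hc)
  -- key lower bound on S(t u)/ν
  have key : ∀ ν ∈ Set.Ioc (0:ℝ) 1, ∀ u ∈ Set.Ioi (0:ℝ),
      A * u ^ 3 ≤ S (ν ^ ((1:ℝ)/3) * u) / ν ∨ A * u ≤ S (ν ^ ((1:ℝ)/3) * u) / ν := by
    intro ν hν u hu
    have hν0 : 0 < ν := hν.1
    have hu0 : (0:ℝ) < u := hu
    set t : ℝ := ν ^ ((1:ℝ)/3) with htdef
    have ht0 : 0 < t := Real.rpow_pos_of_pos hν0 _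
    set p : ℝ := t * u with hpdef
    have hp0 : 0 < p := mul_pos ht0 hu0
    have ht3 : t ^ 3 = ν := by
      rw [htdef, ← Real.rpow_natCast (ν ^ ((1:ℝ)/3)) 3, ← Real.rpow_mul hν0.le]
      norm_num
    have hp3 : p ^ 3 = ν * u ^ 3 := by rw [hpdef, mul_pow, ht3]
    rcases le_or_gt p δ with h1 | h1
    · left
      have hmem : p ∈ Set.Ioc 0 δ := ⟨hp0, h1⟩
      have h2 : L / 2 ≤ S p / p ^ 3 := hδ hmem
      have hSp : L / 2 * p ^ 3 ≤ S p := (le_div_iff₀ (by positivity)).mp h2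
      have hAL : A ≤ L / 2 := min_le_left _ _
      have h3 := mul_le_mul_of_nonneg_right hAL (show (0:ℝ) ≤ u ^ 3 * ν by positivity)
      refine (le_div_iff₀ hν0).mpr ?_
      nlinarith [hSp, hp3]
    · rcases le_or_gt p R' with h2 | h2
      · left
        have hmS : m ≤ S p := hx₀min ⟨h1.le, h2⟩
        have h3 : ν * u ^ 3 ≤ R' ^ 3 := by
          rw [← hp3]; exact pow_le_pow_left₀ hp0.le h2 3
        have hA1 : A ≤ m / R' ^ 3 := le_trans (min_le_right _ _) (min_le_left _ _)
        have h4 := mul_le_mul_of_nonneg_right hA1 (show (0:ℝ) ≤ u ^ 3 * ν by positivity)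
        refine (le_div_iff₀ hν0).mpr ?_
        have h5 : m / R' ^ 3 * (u ^ 3 * ν) ≤ m := by
          rw [div_mul_eq_mul_div, div_le_iff₀ (by positivity)]
          nlinarith [h3]
        linarith [le_trans h4 (h5.trans hmS)]
      · right
        have hpR : R ≤ p := le_trans (le_max_left R δ) h2.le
        have hSp : c * p ≤ S p := hgr p hpR
        have hA2 : A ≤ c := le_trans (min_le_right _ _) (min_le_right _ _)
        have hνt : ν ≤ t := by
          have h4 : t / ν = ν ^ ((1:ℝ)/3 - 1) := by
            rw [Real.rpow_sub hν0, Real.rpow_one]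
          have h5 : (1:ℝ) ≤ t / ν := by
            rw [h4]
            exact Real.one_le_rpow_of_pos_of_le_one_of_nonpos hν0 hν.2 (by norm_num)
          exact (one_le_div hν0).mp h5
        refine (le_div_iff₀ hν0).mpr ?_
        have : A * u * ν ≤ c * u * t := by
          have h6 : A * u ≤ c * u := mul_le_mul_of_nonneg_right hA2 hu0.le
          nlinarith [mul_pos hc hu0]
        calc A * u * ν ≤ c * u * t := this
          _ = c * p := by rw [hpdef]; ring
          _ ≤ S p := hSp
  -- exponential bound
  have expbound : ∀ ν ∈ Set.Ioc (0:ℝ) 1, ∀ u ∈ Set.Ioi (0:ℝ),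
      Real.exp (-S (ν ^ ((1:ℝ)/3) * u) / ν) ≤
        Real.exp (-(A * u ^ 3)) + Real.exp (-(A * u)) := by
    intro ν hν u hu
    rcases key ν hν u hu with h | h
    · have h1 : Real.exp (-S (ν ^ ((1:ℝ)/3) * u) / ν) ≤ Real.exp (-(A * u ^ 3)) := by
        rw [neg_div]; exact Real.exp_le_exp.mpr (neg_le_neg h)
      exact h1.trans (le_add_of_nonneg_right (Real.exp_pos _).le)
    · have h1 : Real.exp (-S (ν ^ ((1:ℝ)/3) * u) / ν) ≤ Real.exp (-(A * u)) := by
        rw [neg_div]; exact Real.exp_le_exp.mpr (neg_le_neg h)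
      exact h1.trans (le_add_of_nonneg_left (Real.exp_pos _).le)
  -- continuity in u for fixed ν > 0
  have hmeasT : ∀ ν ∈ Set.Ioi (0:ℝ),
      ContinuousOn (fun u : ℝ => Real.exp (-S (ν ^ ((1:ℝ)/3) * u) / ν)) (Set.Ioi 0) := by
    intro ν hν
    have ht0 : 0 < ν ^ ((1:ℝ)/3) := Real.rpow_pos_of_pos hν _
    have hmap : Set.MapsTo (fun u : ℝ => ν ^ ((1:ℝ)/3) * u) (Set.Ioi 0) (Set.Ioi 0) :=
      fun u hu => mul_pos ht0 hu
    have h1 : ContinuousOn (fun u : ℝ => S (ν ^ ((1:ℝ)/3) * u)) (Set.Ioi 0) :=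
      hcont.comp ((continuous_const.mul continuous_id).continuousOn) hmap
    exact Real.continuous_exp.comp_continuousOn (h1.neg.div_const ν)
  -- pointwise limit
  have hpt : ∀ u ∈ Set.Ioi (0:ℝ),
      Filter.Tendsto (fun ν : ℝ => S (ν ^ ((1:ℝ)/3) * u) / ν)
        (nhdsWithin 0 (Set.Ioi 0)) (nhds (L * u ^ 3)) := by
    intro u hu
    have hu0 : (0:ℝ) < u := hu
    have h1 : Filter.Tendsto (fun ν : ℝ => ν ^ ((1:ℝ)/3) * u)
        (nhdsWithin 0 (Set.Ioi 0)) (nhdsWithin 0 (Set.Ioi 0)) := by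
      apply tendsto_nhdsWithin_of_tendsto_nhds_of_eventually_within
      · have h2 : Filter.Tendsto (fun ν : ℝ => ν ^ ((1:ℝ)/3)) (nhds 0)
            (nhds ((0:ℝ) ^ ((1:ℝ)/3))) :=
          (Real.continuousAt_rpow_const 0 ((1:ℝ)/3) (Or.inr (by norm_num)))
        rw [Real.zero_rpow (by norm_num)] at h2
        have h3 := (h2.mono_left (nhdsWithin_le_nhds (s := Set.Ioi (0:ℝ)))).mul_const u
        simpa using h3
      · filter_upwards [self_mem_nhdsWithin] with ν hν
        exact mul_pos (Real.rpow_pos_of_pos hν _) hu0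
    have h2 : Filter.Tendsto
        (fun ν : ℝ => S (ν ^ ((1:ℝ)/3) * u) / (ν ^ ((1:ℝ)/3) * u) ^ 3 * u ^ 3)
        (nhdsWithin 0 (Set.Ioi 0)) (nhds (L * u ^ 3)) := (hlim.comp h1).mul_const _
    refine h2.congr' ?_
    filter_upwards [self_mem_nhdsWithin] with ν hν
    have hν0 : (0:ℝ) < ν := hν
    have ht3 : (ν ^ ((1:ℝ)/3)) ^ 3 = ν := by
      rw [← Real.rpow_natCast (ν ^ ((1:ℝ)/3)) 3, ← Real.rpow_mul hν0.le]; norm_num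
    have hp3 : (ν ^ ((1:ℝ)/3) * u) ^ 3 = ν * u ^ 3 := by rw [mul_pow, ht3]
    rw [hp3]
    field_simp
  have hptD : ∀ u ∈ Set.Ioi (0:ℝ),
      Filter.Tendsto (fun ν : ℝ => Real.exp (-S (ν ^ ((1:ℝ)/3) * u) / ν))
        (nhdsWithin 0 (Set.Ioi 0)) (nhds (Real.exp (-(L * u ^ 3)))) := by
    intro u hu
    have h1 := (Real.continuous_exp.tendsto _).comp (hpt u hu).neg
    simpa [neg_div, Function.comp_def] using h1
  have hIoc : Set.Ioc (0:ℝ) 1 ∈ nhdsWithin (0:ℝ) (Set.Ioi 0) :=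
    Ioc_mem_nhdsGT_of_mem ⟨le_refl 0, zero_lt_one⟩
  -- denominator convergence
  have i1 : IntegrableOn (fun u : ℝ => Real.exp (-(A * u ^ 3))) (Set.Ioi 0) := by
    simpa using integrableOn_pow_mul_exp_neg_mul_pow_aux hA 3 0 (by norm_num)
  have i2 : IntegrableOn (fun u : ℝ => Real.exp (-(A * u))) (Set.Ioi 0) := by
    simpa using integrableOn_pow_mul_exp_neg_mul_pow_aux hA 1 0 (by norm_num)
  have i3 : IntegrableOn (fun u : ℝ => u * Real.exp (-(A * u ^ 3))) (Set.Ioi 0) := by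
    simpa using integrableOn_pow_mul_exp_neg_mul_pow_aux hA 3 1 (by norm_num)
  have i4 : IntegrableOn (fun u : ℝ => u * Real.exp (-(A * u))) (Set.Ioi 0) := by
    simpa using integrableOn_pow_mul_exp_neg_mul_pow_aux hA 1 1 (by norm_num)
  have hDten : Filter.Tendsto
      (fun ν : ℝ => ∫ u in Set.Ioi (0:ℝ), Real.exp (-S (ν ^ ((1:ℝ)/3) * u) / ν))
      (nhdsWithin 0 (Set.Ioi 0))
      (nhds (∫ u in Set.Ioi (0:ℝ), Real.exp (-(L * u ^ 3)))) := by
    refine MeasureTheory.tendsto_integral_filter_of_dominated_convergence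
      (fun u => Real.exp (-(A * u ^ 3)) + Real.exp (-(A * u))) ?_ ?_ (i1.add i2) ?_
    · filter_upwards [self_mem_nhdsWithin] with ν hν
      exact (hmeasT ν hν).aestronglyMeasurable measurableSet_Ioi
    · filter_upwards [hIoc] with ν hν
      rw [MeasureTheory.ae_restrict_iff' measurableSet_Ioi]
      filter_upwards with u hu
      rw [Real.norm_eq_abs, abs_of_pos (Real.exp_pos _)]
      exact expbound ν hν u hu
    · filter_upwards [MeasureTheory.ae_restrict_mem measurableSet_Ioi] with u hu
      exact hptD u hu
  -- numerator convergence
  have hNten : Filter.Tendsto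
      (fun ν : ℝ => ∫ u in Set.Ioi (0:ℝ), Real.exp (-S (ν ^ ((1:ℝ)/3) * u) / ν) * u)
      (nhdsWithin 0 (Set.Ioi 0))
      (nhds (∫ u in Set.Ioi (0:ℝ), Real.exp (-(L * u ^ 3)) * u)) := by
    refine MeasureTheory.tendsto_integral_filter_of_dominated_convergence
      (fun u => u * Real.exp (-(A * u ^ 3)) + u * Real.exp (-(A * u))) ?_ ?_ (i3.add i4) ?_
    · filter_upwards [self_mem_nhdsWithin] with ν hν
      exact ((hmeasT ν hν).mul continuousOn_id).aestronglyMeasurable measurableSet_Ioi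
    · filter_upwards [hIoc] with ν hν
      rw [MeasureTheory.ae_restrict_iff' measurableSet_Ioi]
      filter_upwards with u hu
      have hu0 : (0:ℝ) < u := hu
      rw [Real.norm_eq_abs, abs_of_pos (mul_pos (Real.exp_pos _) hu0)]
      have h1 := mul_le_mul_of_nonneg_right (expbound ν hν u hu) hu0.le
      calc Real.exp (-S (ν ^ ((1:ℝ)/3) * u) / ν) * u
          ≤ (Real.exp (-(A * u ^ 3)) + Real.exp (-(A * u))) * u := h1
        _ = u * Real.exp (-(A * u ^ 3)) + u * Real.exp (-(A * u)) := by ring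
    · filter_upwards [MeasureTheory.ae_restrict_mem measurableSet_Ioi] with u hu
      exact (hptD u hu).mul_const u
  -- values of the limit integrals
  have hI1 : (∫ u in Set.Ioi (0:ℝ), Real.exp (-(L * u ^ 3)))
      = L ^ (-(1/3) : ℝ) * (1/3) * Real.Gamma (1/3) := by
    have h0 := integral_rpow_mul_exp_neg_mul_rpow (p := 3) (q := 0) (b := L)
      (by norm_num) (by norm_num) hL
    rw [show (-((0:ℝ)+1)/3 : ℝ) = -(1/3) by norm_num, show (((0:ℝ)+1)/3 : ℝ) = 1/3 by norm_num]
      at h0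
    rw [← h0]
    refine setIntegral_congr_fun measurableSet_Ioi fun x hx => ?_
    rw [Real.rpow_zero, one_mul, show (3:ℝ) = ((3:ℕ):ℝ) by norm_num, Real.rpow_natCast, neg_mul]
  have hI2 : (∫ u in Set.Ioi (0:ℝ), Real.exp (-(L * u ^ 3)) * u)
      = L ^ (-(2/3) : ℝ) * (1/3) * Real.Gamma (2/3) := by
    have h0 := integral_rpow_mul_exp_neg_mul_rpow (p := 3) (q := 1) (b := L)
      (by norm_num) (by norm_num) hL
    rw [show (-((1:ℝ)+1)/3 : ℝ) = -(2/3) by norm_num, show (((1:ℝ)+1)/3 : ℝ) = 2/3 by norm_num]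
      at h0
    rw [← h0]
    refine setIntegral_congr_fun measurableSet_Ioi fun x hx => ?_
    rw [Real.rpow_one, show (3:ℝ) = ((3:ℕ):ℝ) by norm_num, Real.rpow_natCast, neg_mul, mul_comm]
  have hΓ1 : 0 < Real.Gamma (1/3) := Real.Gamma_pos_of_pos (by norm_num)
  have hΓ2 : 0 < Real.Gamma (2/3) := Real.Gamma_pos_of_pos (by norm_num)
  have hI1pos : 0 < L ^ (-(1/3) : ℝ) * (1/3) * Real.Gamma (1/3) := by
    have := Real.rpow_pos_of_pos hL (-(1/3) : ℝ); positivity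
  have hI1ne : (∫ u in Set.Ioi (0:ℝ), Real.exp (-(L * u ^ 3))) ≠ 0 := by
    rw [hI1]; exact hI1pos.ne'
  have hdiv : Filter.Tendsto
      (fun ν : ℝ => (∫ u in Set.Ioi (0:ℝ), Real.exp (-S (ν ^ ((1:ℝ)/3) * u) / ν) * u) /
        (∫ u in Set.Ioi (0:ℝ), Real.exp (-S (ν ^ ((1:ℝ)/3) * u) / ν)))
      (nhdsWithin 0 (Set.Ioi 0))
      (nhds ((∫ u in Set.Ioi (0:ℝ), Real.exp (-(L * u ^ 3)) * u) /
        (∫ u in Set.Ioi (0:ℝ), Real.exp (-(L * u ^ 3))))) := hNten.div hDten hI1ne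
  have hconst : (∫ u in Set.Ioi (0:ℝ), Real.exp (-(L * u ^ 3)) * u) /
      (∫ u in Set.Ioi (0:ℝ), Real.exp (-(L * u ^ 3)))
      = L ^ (-(1/3) : ℝ) * (Real.Gamma (2/3) / Real.Gamma (1/3)) := by
    rw [hI1, hI2]
    have hsplit : (L:ℝ) ^ (-(2/3) : ℝ) = L ^ (-(1/3) : ℝ) * L ^ (-(1/3) : ℝ) := by
      rw [← Real.rpow_add hL]; norm_num
    rw [hsplit]
    have hLp : (0:ℝ) < L ^ (-(1/3) : ℝ) := Real.rpow_pos_of_pos hL _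
    field_simp
  rw [← hconst]
  refine hdiv.congr' ?_
  filter_upwards [self_mem_nhdsWithin] with ν hν
  have hν0 : (0:ℝ) < ν := hν
  set t : ℝ := ν ^ ((1:ℝ)/3) with htdef
  have ht0 : 0 < t := Real.rpow_pos_of_pos hν0 _
  have e1 : (∫ ξ in Set.Ioi (0:ℝ), Real.exp (-S ξ / ν))
      = t * ∫ u in Set.Ioi (0:ℝ), Real.exp (-S (t * u) / ν) := by
    have h := integral_comp_mul_left_Ioi (fun ξ => Real.exp (-S ξ / ν)) 0 ht0
    rw [mul_zero, smul_eq_mul] at h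
    rw [h, ← mul_assoc, mul_inv_cancel₀ ht0.ne', one_mul]
  have e2 : (∫ ξ in Set.Ioi (0:ℝ), Real.exp (-S ξ / ν) * ξ)
      = t * (t * ∫ u in Set.Ioi (0:ℝ), Real.exp (-S (t * u) / ν) * u) := by
    have h := integral_comp_mul_left_Ioi (fun ξ => Real.exp (-S ξ / ν) * ξ) 0 ht0
    rw [mul_zero, smul_eq_mul] at h
    have h5 : (∫ x in Set.Ioi (0:ℝ), Real.exp (-S (t * x) / ν) * (t * x))
        = t * ∫ u in Set.Ioi (0:ℝ), Real.exp (-S (t * u) / ν) * u := by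
      rw [← MeasureTheory.integral_const_mul]
      exact setIntegral_congr_fun measurableSet_Ioi fun x hx => by ring
    rw [← h5, h, ← mul_assoc, mul_inv_cancel₀ ht0.ne', one_mul]
  have hone : ν ^ (-(1/3) : ℝ) * t = 1 := by
    rw [htdef, ← Real.rpow_add hν0]; norm_num
  rw [e1, e2, mul_div_mul_left _ _ ht0.ne', mul_div_assoc, ← mul_assoc, hone, one_mul]
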